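/- Under the same assumptions (Y centered, E‖Y‖² < ∞, ν∗μ_Y ≪ μ_Y, Poincaré inequality with constant U_Y), there exists a unique τ_Y ∈ H_{ν,0}(μ_Y) such that A(f, τ_Y) = E⟨Y, f(Y)⟩ for all f ∈ H_{ν,0}(μ_Y); and this τ_Y satisfies E∫‖τ_Y(Y+u) − τ_Y(Y)‖²ν(du) ≤ U_Y · E‖Y‖². -/

import Mathlib

open MeasureTheory
open scoped RealInnerProductSpace

/-- Convolution of a (Lévy) measure `ν` with a probability measure `μ` on `ℝ^d`:
`(ν ∗ μ)(B) = ∫∫ 1_B(u + y) ν(du) μ(dy)`. -/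
noncomputable def convMeas {d : ℕ} (ν μ : Measure (EuclideanSpace ℝ (Fin d))) :
    Measure (EuclideanSpace ℝ (Fin d)) :=
  (ν.prod μ).map (fun p => p.1 + p.2)

/-- Membership in the space `H_ν(μY)`: Borel measurable `f : ℝ^d → ℝ^d` with
`∫‖f(y)‖² μY(dy) < ∞` and `∫∫‖f(y+u) - f(y)‖² ν(du) μY(dy) < ∞`. -/
def memHnu {d : ℕ} (ν μY : Measure (EuclideanSpace ℝ (Fin d)))
    (f : EuclideanSpace ℝ (Fin d) → EuclideanSpace ℝ (Fin d)) : Prop :=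
  Measurable f ∧ Integrable (fun y => ‖f y‖ ^ 2) μY ∧
    Integrable (fun p : EuclideanSpace ℝ (Fin d) × EuclideanSpace ℝ (Fin d) =>
      ‖f (p.2 + p.1) - f p.2‖ ^ 2) (ν.prod μY)

/-- The bilinear functional `A(f,g) = E ∫ ⟨f(Y+u) - f(Y), g(Y+u) - g(Y)⟩ ν(du)`. -/
noncomputable def bilinA {d : ℕ} (ν μY : Measure (EuclideanSpace ℝ (Fin d)))
    (f g : EuclideanSpace ℝ (Fin d) → EuclideanSpace ℝ (Fin d)) : ℝ :=
  ∫ p : EuclideanSpace ℝ (Fin d) × EuclideanSpace ℝ (Fin d),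
    (⟪f (p.2 + p.1) - f p.2, g (p.2 + p.1) - g p.2⟫ : ℝ) ∂(ν.prod μY)

/-- The norm of `H_ν(μY)` induced by the inner product
`⟨f,g⟩ = E⟨f(Y), g(Y)⟩ + A(f,g)`. -/
noncomputable def hnuNorm {d : ℕ} (ν μY : Measure (EuclideanSpace ℝ (Fin d)))
    (f : EuclideanSpace ℝ (Fin d) → EuclideanSpace ℝ (Fin d)) : ℝ :=
  Real.sqrt ((∫ y, ‖f y‖ ^ 2 ∂μY) + bilinA ν μY f f)

section Aux

variable {d : ℕ} {ν μY : Measure (EuclideanSpace ℝ (Fin d))}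

local notation "𝔼" => EuclideanSpace ℝ (Fin d)

/-- Difference operator. -/
noncomputable def Dm {d : ℕ} (f : EuclideanSpace ℝ (Fin d) → EuclideanSpace ℝ (Fin d)) :
    EuclideanSpace ℝ (Fin d) × EuclideanSpace ℝ (Fin d) → EuclideanSpace ℝ (Fin d) :=
  fun p => f (p.2 + p.1) - f p.2

lemma Dm_measurable {f : 𝔼 → 𝔼} (hf : Measurable f) : Measurable (Dm f) :=
  (hf.comp (measurable_snd.add measurable_fst)).sub (hf.comp measurable_snd)

lemma qmp_add (habs : convMeas ν μY ≪ μY) :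
    Measure.QuasiMeasurePreserving (fun p : 𝔼 × 𝔼 => p.2 + p.1) (ν.prod μY) μY := by
  refine ⟨measurable_snd.add measurable_fst, ?_⟩
  have h : (fun p : 𝔼 × 𝔼 => p.2 + p.1) = fun p : 𝔼 × 𝔼 => p.1 + p.2 :=
    funext fun p => add_comm _ _
  rw [h]
  exact habs

lemma qmp_snd [SigmaFinite ν] [IsProbabilityMeasure μY] :
    Measure.QuasiMeasurePreserving (Prod.snd : 𝔼 × 𝔼 → 𝔼) (ν.prod μY) μY := by
  refine ⟨measurable_snd, Measure.AbsolutelyContinuous.mk fun s hs h0 => ?_⟩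
  rw [Measure.map_apply measurable_snd hs]
  have h : (Prod.snd ⁻¹' s : Set (𝔼 × 𝔼)) = Set.univ ×ˢ s := by ext p; simp
  rw [h, Measure.prod_prod, h0, mul_zero]

lemma memHnu_iff {f : 𝔼 → 𝔼} :
    memHnu ν μY f ↔ Measurable f ∧ MemLp f 2 μY ∧ MemLp (Dm f) 2 (ν.prod μY) := by
  constructor
  · rintro ⟨hm, h1, h2⟩
    exact ⟨hm, (memLp_two_iff_integrable_sq_norm hm.aestronglyMeasurable).mpr h1,
      (memLp_two_iff_integrable_sq_norm (Dm_measurable hm).aestronglyMeasurable).mpr h2⟩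
  · rintro ⟨hm, h1, h2⟩
    exact ⟨hm, (memLp_two_iff_integrable_sq_norm hm.aestronglyMeasurable).mp h1,
      (memLp_two_iff_integrable_sq_norm (Dm_measurable hm).aestronglyMeasurable).mp h2⟩

end Aux

section Space

variable {d : ℕ} (ν μY : Measure (EuclideanSpace ℝ (Fin d)))

local notation "𝔼" => EuclideanSpace ℝ (Fin d)

/-- Ambient Hilbert space. -/
noncomputable abbrev Vsp (ν μY : Measure (EuclideanSpace ℝ (Fin d))) :=
  WithLp 2 (Lp (EuclideanSpace ℝ (Fin d)) 2 μY × Lp (EuclideanSpace ℝ (Fin d)) 2 (ν.prod μY))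

lemma Dm_add (f g : 𝔼 → 𝔼) : Dm (f + g) = Dm f + Dm g := by
  funext p; simp only [Dm, Pi.add_apply]; abel

lemma Dm_smul (c : ℝ) (f : 𝔼 → 𝔼) : Dm (c • f) = c • Dm f := by
  funext p; simp only [Dm, Pi.smul_apply, smul_sub]

lemma Dm_zero : Dm (0 : 𝔼 → 𝔼) = 0 := by
  funext p; simp [Dm]

/-- The subspace of pairs `(f, Df)` with `f` of mean zero. -/
noncomputable def Ksub [IsProbabilityMeasure μY] : Submodule ℝ (Vsp ν μY) where
  carrier := {v | ∃ f : 𝔼 → 𝔼, Measurable f ∧ ⇑v.fst =ᵐ[μY] f ∧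
      ⇑v.snd =ᵐ[ν.prod μY] Dm f ∧ ∫ y, f y ∂μY = 0}
  zero_mem' := by
    refine ⟨0, measurable_zero, ?_, ?_, by simp⟩
    · simpa using Lp.coeFn_zero (E := 𝔼) (p := 2) (μ := μY)
    · rw [Dm_zero]
      simpa using Lp.coeFn_zero (E := 𝔼) (p := 2) (μ := ν.prod μY)
  add_mem' := by
    rintro v w ⟨f, hfm, hf1, hf2, hf0⟩ ⟨g, hgm, hg1, hg2, hg0⟩
    refine ⟨f + g, hfm.add hgm, ?_, ?_, ?_⟩
    · filter_upwards [Lp.coeFn_add v.fst w.fst, hf1, hg1] with y h1 h2 h3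
      have e : ⇑((v + w).fst) y = ⇑(v.fst + w.fst) y := rfl
      rw [e, h1]; simp [h2, h3]
    · rw [Dm_add]
      filter_upwards [Lp.coeFn_add v.snd w.snd, hf2, hg2] with y h1 h2 h3
      have e : ⇑((v + w).snd) y = ⇑(v.snd + w.snd) y := rfl
      rw [e, h1]; simp [h2, h3]
    · have hif : Integrable f μY := ((Lp.memLp v.fst).ae_eq hf1).integrable one_le_two
      have hig : Integrable g μY := ((Lp.memLp w.fst).ae_eq hg1).integrable one_le_two
      simp [integral_add hif hig, hf0, hg0]
  smul_mem' := by
    rintro c v ⟨f, hfm, hf1, hf2, hf0⟩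
    refine ⟨c • f, hfm.const_smul c, ?_, ?_, ?_⟩
    · filter_upwards [Lp.coeFn_smul c v.fst, hf1] with y h1 h2
      have e : ⇑((c • v).fst) y = ⇑(c • v.fst) y := rfl
      rw [e, h1]; simp [h2]
    · rw [Dm_smul]
      filter_upwards [Lp.coeFn_smul c v.snd, hf2] with y h1 h2
      have e : ⇑((c • v).snd) y = ⇑(c • v.snd) y := rfl
      rw [e, h1]; simp [h2]
    · simp [integral_smul, hf0]

end Space

section Closed

variable {d : ℕ} {ν μY : Measure (EuclideanSpace ℝ (Fin d))}

local notation "𝔼" => EuclideanSpace ℝ (Fin d)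

set_option synthInstance.maxHeartbeats 1000000 in
set_option maxHeartbeats 2000000 in
lemma Ksub_isClosed [SigmaFinite ν] [IsProbabilityMeasure μY]
    (habs : convMeas ν μY ≪ μY) :
    IsClosed ((Ksub ν μY : Set (Vsp ν μY))) := by
  refine IsSeqClosed.isClosed ?_
  intro v w hv hw
  -- componentwise convergence
  have cle := WithLp.prodContinuousLinearEquiv 2 ℝ
    (Lp 𝔼 2 μY) (Lp 𝔼 2 (ν.prod μY))
  have h1 : Filter.Tendsto (fun n => (v n).fst) Filter.atTop (nhds w.fst) :=
    ((continuous_fst.comp (WithLp.prodContinuousLinearEquiv 2 ℝ _ _).continuous).tendsto w).comp hw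
  have h2 : Filter.Tendsto (fun n => (v n).snd) Filter.atTop (nhds w.snd) :=
    ((continuous_snd.comp (WithLp.prodContinuousLinearEquiv 2 ℝ _ _).continuous).tendsto w).comp hw
  choose F hFm hF1 hF2 hF0 using hv
  -- a.e. convergent subsequences
  obtain ⟨ns1, hns1, hae1⟩ :=
    (tendstoInMeasure_of_tendsto_Lp h1).exists_seq_tendsto_ae
  have h2' : Filter.Tendsto (fun i => (v (ns1 i)).snd) Filter.atTop (nhds w.snd) :=
    h2.comp hns1.tendsto_atTop
  obtain ⟨ns2, hns2, hae2⟩ :=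
    (tendstoInMeasure_of_tendsto_Lp h2').exists_seq_tendsto_ae
  set φ := (Lp.aestronglyMeasurable w.fst).mk _ with hφdef
  have hφm : Measurable φ := (Lp.aestronglyMeasurable w.fst).stronglyMeasurable_mk.measurable
  have hφeq : ⇑w.fst =ᵐ[μY] φ := (Lp.aestronglyMeasurable w.fst).ae_eq_mk
  have qA := qmp_add (ν := ν) (μY := μY) habs
  have qS := qmp_snd (ν := ν) (μY := μY)
  refine ⟨φ, hφm, hφeq, ?_, ?_⟩
  · -- second component
    have hallF : ∀ᵐ x ∂μY, ∀ n, ⇑(v n).fst x = F n x := ae_all_iff.mpr hF1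
    have E1 := qA.ae hae1
    have E2 := qS.ae hae1
    have E3a := qA.ae hallF
    have E3b := qS.ae hallF
    have E6a := qA.ae hφeq
    have E6b := qS.ae hφeq
    have E4 : ∀ᵐ p ∂(ν.prod μY), ∀ n, ⇑(v n).snd p = Dm (F n) p := ae_all_iff.mpr hF2
    filter_upwards [E1, E2, E3a, E3b, E6a, E6b, E4, hae2] with p e1 e2 e3a e3b e6a e6b e4 e5
    have t1 : Filter.Tendsto (fun i => ⇑(v (ns1 (ns2 i))).fst (p.2 + p.1)) Filter.atTop
        (nhds (⇑w.fst (p.2 + p.1))) := e1.comp hns2.tendsto_atTop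
    have t2 : Filter.Tendsto (fun i => ⇑(v (ns1 (ns2 i))).fst p.2) Filter.atTop
        (nhds (⇑w.fst p.2)) := e2.comp hns2.tendsto_atTop
    have t3 : Filter.Tendsto (fun i => ⇑(v (ns1 (ns2 i))).snd p) Filter.atTop
        (nhds (Dm φ p)) := by
      have : (fun i => ⇑(v (ns1 (ns2 i))).snd p)
          = fun i => ⇑(v (ns1 (ns2 i))).fst (p.2 + p.1) - ⇑(v (ns1 (ns2 i))).fst p.2 := by
        funext i
        rw [e4]
        simp only [Dm, e3a, e3b]
      rw [this]
      have := t1.sub t2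
      rw [Dm]
      rw [← e6a, ← e6b]
      exact this
    exact tendsto_nhds_unique e5 t3
  · -- mean zero
    have hwint : Integrable (⇑w.fst) μY := (Lp.memLp w.fst).integrable one_le_two
    have hinner : ∀ c : 𝔼, ∫ y, (⟪c, ⇑w.fst y⟫ : ℝ) ∂μY = 0 := by
      intro c
      set cc : Lp 𝔼 2 μY := (memLp_const c).toLp (fun _ => c) with hccdef
      have hccfn : ⇑cc =ᵐ[μY] fun _ => c := MemLp.coeFn_toLp _
      have key : ∀ u : Lp 𝔼 2 μY, (inner ℝ cc u : ℝ) = ∫ y, (⟪c, ⇑u y⟫ : ℝ) ∂μY := by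
        intro u
        rw [L2.inner_def]
        refine integral_congr_ae ?_
        filter_upwards [hccfn] with y hy
        rw [hy]
      have hzero : ∀ n, (inner ℝ cc ((v n).fst) : ℝ) = 0 := by
        intro n
        rw [key]
        have hFint : Integrable (F n) μY :=
          ((Lp.memLp (v n).fst).ae_eq (hF1 n)).integrable one_le_two
        have : ∫ y, (⟪c, ⇑(v n).fst y⟫ : ℝ) ∂μY = ∫ y, (⟪c, F n y⟫ : ℝ) ∂μY := by
          refine integral_congr_ae ?_
          filter_upwards [hF1 n] with y hy
          rw [hy]
        rw [this, integral_inner hFint, hF0 n, inner_zero_right]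
      have hlim : Filter.Tendsto (fun n => (inner ℝ cc ((v n).fst) : ℝ)) Filter.atTop
          (nhds (inner ℝ cc w.fst : ℝ)) := Filter.Tendsto.inner tendsto_const_nhds h1
      have : (inner ℝ cc w.fst : ℝ) = 0 :=
        tendsto_nhds_unique hlim (by simpa [hzero] using tendsto_const_nhds)
      rw [← key]
      exact this
    have : ∫ y, ⇑w.fst y ∂μY = 0 :=
      integral_eq_zero_of_forall_integral_inner_eq_zero ℝ _ hwint hinner
    rw [← integral_congr_ae hφeq]
    exact this

end Closed

section Helpers

variable {d : ℕ} {ν μY : Measure (EuclideanSpace ℝ (Fin d))}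

local notation "𝔼" => EuclideanSpace ℝ (Fin d)

lemma bilinA_eq (f g : 𝔼 → 𝔼) :
    bilinA ν μY f g = ∫ p, (⟪Dm f p, Dm g p⟫ : ℝ) ∂(ν.prod μY) := rfl

lemma integrable_inner_of_memL2 {α : Type*} [MeasurableSpace α] {μ : Measure α}
    {f g : α → 𝔼} (hf : MemLp f 2 μ) (hg : MemLp g 2 μ) :
    Integrable (fun x => (⟪f x, g x⟫ : ℝ)) μ := by
  have h := L2.integrable_inner (𝕜 := ℝ) (hf.toLp f) (hg.toLp g)
  refine h.congr ?_
  filter_upwards [hf.coeFn_toLp, hg.coeFn_toLp] with x h1 h2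
  rw [h1, h2]

lemma memHnu_sub {f g : 𝔼 → 𝔼} (hf : memHnu ν μY f) (hg : memHnu ν μY g) :
    memHnu ν μY (fun y => f y - g y) := by
  rw [memHnu_iff] at hf hg ⊢
  obtain ⟨hfm, hf1, hf2⟩ := hf
  obtain ⟨hgm, hg1, hg2⟩ := hg
  refine ⟨hfm.sub hgm, hf1.sub hg1, ?_⟩
  have : Dm (fun y => f y - g y) = fun p => Dm f p - Dm g p := by
    funext p; simp only [Dm]; abel
  rw [this]
  exact hf2.sub hg2

/-- Uniqueness part. -/
lemma stein_unique [IsProbabilityMeasure μY] (U : ℝ) (hU : 0 < U)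
    (hPoin : ∀ f, memHnu ν μY f →
      ∫ y, ‖f y - ∫ z, f z ∂μY‖ ^ 2 ∂μY ≤ U * bilinA ν μY f f)
    (τ τ' : 𝔼 → 𝔼) (hτ : memHnu ν μY τ) (hτ' : memHnu ν μY τ')
    (hτ0 : ∫ y, τ y ∂μY = 0) (hτ'0 : ∫ y, τ' y ∂μY = 0)
    (hrep : ∀ f, memHnu ν μY f → ∫ y, f y ∂μY = 0 →
      bilinA ν μY f τ = ∫ y, (⟪y, f y⟫ : ℝ) ∂μY)
    (hrep' : ∀ f, memHnu ν μY f → ∫ y, f y ∂μY = 0 →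
      bilinA ν μY f τ' = ∫ y, (⟪y, f y⟫ : ℝ) ∂μY) :
    τ' =ᵐ[μY] τ := by
  set g : 𝔼 → 𝔼 := fun y => τ' y - τ y with hgdef
  have hgmem : memHnu ν μY g := memHnu_sub hτ' hτ
  have hτint : Integrable τ μY :=
    ((memHnu_iff.mp hτ).2.1).integrable one_le_two
  have hτ'int : Integrable τ' μY :=
    ((memHnu_iff.mp hτ').2.1).integrable one_le_two
  have hg0 : ∫ y, g y ∂μY = 0 := by
    simp only [hgdef]
    rw [integral_sub hτ'int hτint, hτ0, hτ'0, sub_zero]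
  have hDτ : MemLp (Dm τ) 2 (ν.prod μY) := (memHnu_iff.mp hτ).2.2
  have hDτ' : MemLp (Dm τ') 2 (ν.prod μY) := (memHnu_iff.mp hτ').2.2
  have hDg : MemLp (Dm g) 2 (ν.prod μY) := (memHnu_iff.mp hgmem).2.2
  have hAgg : bilinA ν μY g g = 0 := by
    have h1 := hrep' g hgmem hg0
    have h2 := hrep g hgmem hg0
    have hsplit : bilinA ν μY g τ' - bilinA ν μY g τ = bilinA ν μY g g := by
      rw [bilinA_eq, bilinA_eq, bilinA_eq,
        ← integral_sub (integrable_inner_of_memL2 hDg hDτ')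
          (integrable_inner_of_memL2 hDg hDτ)]
      refine integral_congr_ae (Filter.Eventually.of_forall fun p => ?_)
      have hDgp : Dm g p = Dm τ' p - Dm τ p := by simp only [Dm, hgdef]; abel
      show (⟪Dm g p, Dm τ' p⟫ - ⟪Dm g p, Dm τ p⟫ : ℝ) = (⟪Dm g p, Dm g p⟫ : ℝ)
      rw [← inner_sub_right, ← hDgp]
    rw [h1, h2, sub_self] at hsplit
    exact hsplit.symm
  have hP := hPoin g hgmem
  rw [hAgg, mul_zero, hg0] at hP
  have hgsq : Integrable (fun y => ‖g y‖ ^ 2) μY := hgmem.2.1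
  have hP' : ∫ y, ‖g y‖ ^ 2 ∂μY ≤ 0 := by simpa using hP
  have hint0 : ∫ y, ‖g y‖ ^ 2 ∂μY = 0 :=
    le_antisymm hP' (integral_nonneg fun y => by positivity)
  have hnonneg : 0 ≤ᵐ[μY] fun y => ‖g y‖ ^ 2 :=
    Filter.Eventually.of_forall fun y => by positivity
  have hzero := (integral_eq_zero_iff_of_nonneg_ae hnonneg hgsq).mp hint0
  filter_upwards [hzero] with y hy
  have : ‖g y‖ ^ 2 = 0 := hy
  have hgy : g y = 0 := by
    have := pow_eq_zero_iff (n := 2) (by norm_num) |>.mp this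
    simpa using this
  have : τ' y - τ y = 0 := hgy
  exact sub_eq_zero.mp this

end Helpers

set_option maxHeartbeats 4000000 in
set_option synthInstance.maxHeartbeats 1000000 in
/-- Under the same assumptions (Y centered, `E‖Y‖² < ∞`, `ν ∗ μY ≪ μY`, Poincaré
inequality with constant `U_Y`), there exists a `μY`-a.e. unique `τ_Y ∈ H_{ν,0}(μY)` such that
`A(f, τ_Y) = E⟨Y, f(Y)⟩` for all `f ∈ H_{ν,0}(μY)`, and it satisfies the energy bound
`E∫‖τ_Y(Y+u) - τ_Y(Y)‖² ν(du) ≤ U_Y E‖Y‖²`. -/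
theorem laxMilgram_steinKernel (d : ℕ) (ν μY : Measure (EuclideanSpace ℝ (Fin d)))
    (hprobY : IsProbabilityMeasure μY)
    (hcentY : ∫ y, y ∂μY = 0)
    (hmom2Y : Integrable (fun y => ‖y‖ ^ 2) μY)
    (hsf : SigmaFinite ν)
    (hzero : ν {0} = 0)
    (hlevy : ∫⁻ u, ENNReal.ofReal (min 1 (‖u‖ ^ 2)) ∂ν < ⊤)
    (hbig : IntegrableOn (fun u => ‖u‖ ^ 2) {u : EuclideanSpace ℝ (Fin d) | 1 ≤ ‖u‖} ν)
    (habs : convMeas ν μY ≪ μY)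
    (U : ℝ) (hU : 0 < U)
    (hPoin : ∀ f, memHnu ν μY f →
      ∫ y, ‖f y - ∫ z, f z ∂μY‖ ^ 2 ∂μY ≤ U * bilinA ν μY f f) :
    ∃ τ : EuclideanSpace ℝ (Fin d) → EuclideanSpace ℝ (Fin d),
      (memHnu ν μY τ ∧ ∫ y, τ y ∂μY = 0 ∧
        (∀ f, memHnu ν μY f → ∫ y, f y ∂μY = 0 →
          bilinA ν μY f τ = ∫ y, (⟪y, f y⟫ : ℝ) ∂μY) ∧
        bilinA ν μY τ τ ≤ U * ∫ y, ‖y‖ ^ 2 ∂μY) ∧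
      ∀ τ' : EuclideanSpace ℝ (Fin d) → EuclideanSpace ℝ (Fin d),
        memHnu ν μY τ' → ∫ y, τ' y ∂μY = 0 →
        (∀ f, memHnu ν μY f → ∫ y, f y ∂μY = 0 →
          bilinA ν μY f τ' = ∫ y, (⟪y, f y⟫ : ℝ) ∂μY) →
        τ' =ᵐ[μY] τ := by
  haveI := hsf
  haveI := hprobY
  have hclosed := Ksub_isClosed (ν := ν) (μY := μY) habs
  haveI : CompleteSpace (Ksub ν μY) := hclosed.completeSpace_coe
  -- projections
  let cle := WithLp.prodContinuousLinearEquiv 2 ℝ (Lp (EuclideanSpace ℝ (Fin d)) 2 μY) (Lp (EuclideanSpace ℝ (Fin d)) 2 (ν.prod μY))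
  let P1 : Ksub ν μY →L[ℝ] Lp (EuclideanSpace ℝ (Fin d)) 2 μY :=
    (ContinuousLinearMap.fst ℝ _ _).comp (cle.toContinuousLinearMap.comp (Ksub ν μY).subtypeL)
  let P2 : Ksub ν μY →L[ℝ] Lp (EuclideanSpace ℝ (Fin d)) 2 (ν.prod μY) :=
    (ContinuousLinearMap.snd ℝ _ _).comp (cle.toContinuousLinearMap.comp (Ksub ν μY).subtypeL)
  have hP1 : ∀ v : Ksub ν μY, P1 v = (v : Vsp ν μY).fst := fun v => rfl
  have hP2 : ∀ v : Ksub ν μY, P2 v = (v : Vsp ν μY).snd := fun v => rfl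
  have hnormsq : ∀ v : Ksub ν μY, ‖v‖ ^ 2 = ‖P1 v‖ ^ 2 + ‖P2 v‖ ^ 2 := by
    intro v
    rw [hP1, hP2]
    have h : ‖v‖ = ‖(v : Vsp ν μY)‖ := rfl
    rw [h, WithLp.prod_norm_sq_eq_of_L2]
  -- the bilinear form
  let B0 : Ksub ν μY →ₗ[ℝ] Ksub ν μY →ₗ[ℝ] ℝ :=
    LinearMap.mk₂ ℝ (fun v w => (inner ℝ (P2 v) (P2 w) : ℝ))
      (fun v v' w => by simp only [map_add, inner_add_left])
      (fun c v w => by simp only [_root_.map_smul, real_inner_smul_left, smul_eq_mul])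
      (fun v w w' => by simp only [map_add, inner_add_right])
      (fun c v w => by simp only [_root_.map_smul, real_inner_smul_right, smul_eq_mul])
  have hP2norm : ∀ v : Ksub ν μY, ‖P2 v‖ ≤ ‖v‖ := by
    intro v
    have h := hnormsq v
    nlinarith [norm_nonneg (P1 v), norm_nonneg (P2 v), norm_nonneg v]
  let B : Ksub ν μY →L[ℝ] Ksub ν μY →L[ℝ] ℝ :=
    B0.mkContinuous₂ 1 (fun v w => by
      simp only [B0, LinearMap.mk₂_apply]
      calc ‖(inner ℝ (P2 v) (P2 w) : ℝ)‖ ≤ ‖P2 v‖ * ‖P2 w‖ := norm_inner_le_norm _ _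
        _ ≤ ‖v‖ * ‖w‖ := by
            exact mul_le_mul (hP2norm v) (hP2norm w) (norm_nonneg _) (norm_nonneg _)
        _ = 1 * ‖v‖ * ‖w‖ := by ring)
  have hB : ∀ v w : Ksub ν μY, B v w = (inner ℝ (P2 v) (P2 w) : ℝ) := fun v w => rfl
  -- Poincaré gives the key estimate
  have key : ∀ v : Ksub ν μY, ‖P1 v‖ ^ 2 ≤ U * ‖P2 v‖ ^ 2 := by
    intro v
    obtain ⟨f, hfm, hf1, hf2, hf0⟩ := v.2
    have hfL2 : MemLp f 2 μY := (Lp.memLp _).ae_eq hf1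
    have hDL2 : MemLp (Dm f) 2 (ν.prod μY) := (Lp.memLp _).ae_eq hf2
    have hmem : memHnu ν μY f := memHnu_iff.mpr ⟨hfm, hfL2, hDL2⟩
    have e1 : ‖P1 v‖ ^ 2 = ∫ y, ‖f y‖ ^ 2 ∂μY := by
      rw [← real_inner_self_eq_norm_sq, L2.inner_def]
      refine integral_congr_ae ?_
      have : ⇑(P1 v) =ᵐ[μY] f := by rw [hP1 v]; exact hf1
      filter_upwards [this] with y hy
      rw [hy, real_inner_self_eq_norm_sq]
    have e2 : ‖P2 v‖ ^ 2 = bilinA ν μY f f := by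
      rw [← real_inner_self_eq_norm_sq, L2.inner_def, bilinA_eq]
      refine integral_congr_ae ?_
      have : ⇑(P2 v) =ᵐ[ν.prod μY] Dm f := by rw [hP2 v]; exact hf2
      filter_upwards [this] with p hp
      rw [hp]
    have hp := hPoin f hmem
    rw [hf0] at hp
    simp only [sub_zero] at hp
    rw [e1, e2]
    exact hp
  have coercive : IsCoercive B := by
    refine ⟨(U + 1)⁻¹, by positivity, fun v => ?_⟩
    have h1 := key v
    have h2 := hnormsq v
    have hBv : B v v = ‖P2 v‖ ^ 2 := by rw [hB, real_inner_self_eq_norm_sq]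
    rw [hBv]
    have hinv : (0:ℝ) < U + 1 := by positivity
    rw [mul_assoc, ← sq ‖v‖, inv_mul_le_iff₀ hinv]
    nlinarith
  -- the linear functional
  have hYmem : MemLp (fun y : (EuclideanSpace ℝ (Fin d)) => y) 2 μY :=
    (memLp_two_iff_integrable_sq_norm measurable_id.aestronglyMeasurable).mpr hmom2Y
  let Yel : Lp (EuclideanSpace ℝ (Fin d)) 2 μY := hYmem.toLp _
  have hYel : ⇑Yel =ᵐ[μY] fun y => y := MemLp.coeFn_toLp _
  let ℓ : Ksub ν μY →L[ℝ] ℝ := (innerSL ℝ Yel).comp P1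
  have hℓ : ∀ v : Ksub ν μY, ℓ v = (inner ℝ Yel (P1 v) : ℝ) := fun v => rfl
  -- Lax-Milgram
  let τK : Ksub ν μY :=
    coercive.continuousLinearEquivOfBilin.symm ((InnerProductSpace.toDual ℝ (Ksub ν μY)).symm ℓ)
  have hτK : ∀ x : Ksub ν μY, B τK x = ℓ x := by
    intro x
    rw [← coercive.continuousLinearEquivOfBilin_apply τK x]
    show (inner ℝ (coercive.continuousLinearEquivOfBilin
      (coercive.continuousLinearEquivOfBilin.symm
        ((InnerProductSpace.toDual ℝ (Ksub ν μY)).symm ℓ))) x : ℝ) = ℓ x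
    rw [ContinuousLinearEquiv.apply_symm_apply]
    exact InnerProductSpace.toDual_symm_apply
  -- extract the representative
  obtain ⟨τ, hτm, hτ1, hτ2, hτ0⟩ := τK.2
  have hτL2 : MemLp τ 2 μY := (Lp.memLp _).ae_eq hτ1
  have hτDL2 : MemLp (Dm τ) 2 (ν.prod μY) := (Lp.memLp _).ae_eq hτ2
  have hτmem : memHnu ν μY τ := memHnu_iff.mpr ⟨hτm, hτL2, hτDL2⟩
  -- computation lemmas
  have calcB : ∀ (v : Ksub ν μY) (f : (EuclideanSpace ℝ (Fin d)) → (EuclideanSpace ℝ (Fin d))), ⇑(v : Vsp ν μY).snd =ᵐ[ν.prod μY] Dm f →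
      B v τK = bilinA ν μY f τ := by
    intro v f hv
    rw [hB, L2.inner_def, bilinA_eq]
    refine integral_congr_ae ?_
    have h2 : ⇑(P2 v) =ᵐ[ν.prod μY] Dm f := by rw [hP2 v]; exact hv
    have h3 : ⇑(P2 τK) =ᵐ[ν.prod μY] Dm τ := by rw [hP2 τK]; exact hτ2
    filter_upwards [h2, h3] with p e2 e3
    rw [e2, e3]
  have calcL : ∀ (v : Ksub ν μY) (f : (EuclideanSpace ℝ (Fin d)) → (EuclideanSpace ℝ (Fin d))), ⇑(v : Vsp ν μY).fst =ᵐ[μY] f →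
      ℓ v = ∫ y, (⟪y, f y⟫ : ℝ) ∂μY := by
    intro v f hv
    rw [hℓ, L2.inner_def]
    refine integral_congr_ae ?_
    have h1 : ⇑(P1 v) =ᵐ[μY] f := by rw [hP1 v]; exact hv
    filter_upwards [hYel, h1] with y e1 e2
    rw [e1, e2]
  -- the representation property
  have hrep : ∀ f, memHnu ν μY f → ∫ y, f y ∂μY = 0 →
      bilinA ν μY f τ = ∫ y, (⟪y, f y⟫ : ℝ) ∂μY := by
    intro f hf hf0
    obtain ⟨hfm, hfL2, hfDL2⟩ := memHnu_iff.mp hf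
    let vf0 : Vsp ν μY := (WithLp.equiv 2 _).symm (hfL2.toLp f, hfDL2.toLp (Dm f))
    have hvf0fst : vf0.fst = hfL2.toLp f := rfl
    have hvf0snd : vf0.snd = hfDL2.toLp (Dm f) := rfl
    have hvfmem : vf0 ∈ Ksub ν μY := by
      refine ⟨f, hfm, ?_, ?_, hf0⟩
      · rw [hvf0fst]; exact MemLp.coeFn_toLp _
      · rw [hvf0snd]; exact MemLp.coeFn_toLp _
    let vf : Ksub ν μY := ⟨vf0, hvfmem⟩
    have h1 : B vf τK = bilinA ν μY f τ := by
      refine calcB vf f ?_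
      rw [show ((vf : Vsp ν μY)) = vf0 from rfl, hvf0snd]
      exact MemLp.coeFn_toLp _
    have h2 : ℓ vf = ∫ y, (⟪y, f y⟫ : ℝ) ∂μY := by
      refine calcL vf f ?_
      rw [show ((vf : Vsp ν μY)) = vf0 from rfl, hvf0fst]
      exact MemLp.coeFn_toLp _
    rw [← h1, ← h2]
    rw [show B vf τK = (inner ℝ (P2 vf) (P2 τK) : ℝ) from rfl]
    rw [real_inner_comm]
    rw [show (inner ℝ (P2 τK) (P2 vf) : ℝ) = B τK vf from rfl]
    exact hτK vf
  -- the energy bound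
  have hm0 : (0:ℝ) ≤ ∫ y, ‖y‖ ^ 2 ∂μY := integral_nonneg fun y => by positivity
  have henergy : bilinA ν μY τ τ ≤ U * ∫ y, ‖y‖ ^ 2 ∂μY := by
    have hBττ : B τK τK = bilinA ν μY τ τ := calcB τK τ hτ2
    have hℓτ := hτK τK
    have hτKfst : ‖P1 τK‖ ^ 2 ≤ U * bilinA ν μY τ τ := by
      have := key τK
      have e2 : ‖P2 τK‖ ^ 2 = bilinA ν μY τ τ := by
        rw [← real_inner_self_eq_norm_sq, ← hB, hBττ]
      rw [e2] at this
      exact this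
    have hYnorm : ‖Yel‖ ^ 2 = ∫ y, ‖y‖ ^ 2 ∂μY := by
      rw [← real_inner_self_eq_norm_sq, L2.inner_def]
      refine integral_congr_ae ?_
      filter_upwards [hYel] with y hy
      rw [hy, real_inner_self_eq_norm_sq]
    have hub : bilinA ν μY τ τ ≤ ‖Yel‖ * ‖P1 τK‖ := by
      rw [← hBττ, hℓτ, hℓ]
      exact real_inner_le_norm _ _
    have ha : 0 ≤ bilinA ν μY τ τ := by
      rw [← hBττ, hB, real_inner_self_eq_norm_sq]
      positivity
    set a := bilinA ν μY τ τ
    set m := ∫ y, ‖y‖ ^ 2 ∂μY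
    rcases eq_or_lt_of_le ha with h0 | hpos
    · rw [← h0]; positivity
    · nlinarith [norm_nonneg Yel, norm_nonneg (P1 τK), sq_nonneg (‖Yel‖ * ‖P1 τK‖)]
  refine ⟨τ, ⟨hτmem, hτ0, hrep, henergy⟩, ?_⟩
  intro τ' hτ'mem hτ'0 hτ'rep
  exact stein_unique U hU hPoin τ τ' hτmem hτ'mem hτ0 hτ'0 hrep hτ'rep
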